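/- Let u and v be two fixed real-valued attributes of the N population units, with Ū₁ the sample mean of u over the treatment group (a uniformly random subset of size n₁) and V̄₀ the sample mean of v over the complementary control group of size n₀ = N − n₁. Then the variance of the difference of sample means is Var(Ū₁ − V̄₀) = (1/(N−1)) · [ n₀ σ_u²/n₁ + n₁ σ_v²/n₀ + 2 σ_{u,v} ] = (1/(N−1)) · [ (n₀² σ_u² + n₁² σ_v² + 2 n₁ n₀ σ_{u,v}) / (n₁ n₀) ], where σ_u², σ_v² are the finite-population variances of u and v and σ_{u,v} their finite-population covariance. -/

import Mathlib

open Finset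

/-- Expectation of a statistic `f` of the treatment group, over the uniform
distribution on size-`n₁` subsets of the finite population `Fin N`
(i.e. complete randomization with `n₁` treated units). -/
noncomputable def expct (N n₁ : ℕ) (f : Finset (Fin N) → ℝ) : ℝ :=
  (∑ s ∈ Finset.powersetCard n₁ (Finset.univ : Finset (Fin N)), f s) /
    ((Finset.powersetCard n₁ (Finset.univ : Finset (Fin N))).card : ℝ)

/-- Variance of a statistic of the treatment group under complete randomization. -/
noncomputable def vr (N n₁ : ℕ) (f : Finset (Fin N) → ℝ) : ℝ :=
  expct N n₁ (fun s => (f s - expct N n₁ f) ^ 2)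

/-- Covariance of two statistics of the treatment group under complete randomization. -/
noncomputable def cv (N n₁ : ℕ) (f g : Finset (Fin N) → ℝ) : ℝ :=
  expct N n₁ (fun s => (f s - expct N n₁ f) * (g s - expct N n₁ g))

/-- Mean of the fixed attribute `u` over the group `s`. -/
noncomputable def groupMean {N : ℕ} (u : Fin N → ℝ) (s : Finset (Fin N)) : ℝ :=
  (∑ i ∈ s, u i) / (s.card : ℝ)

/-- Difference of means of attribute `u` between treatment group `s` and its
complement (the control group). -/
noncomputable def delta {N : ℕ} (u : Fin N → ℝ) (s : Finset (Fin N)) : ℝ :=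
  groupMean u s - groupMean u sᶜ

/-- Finite-population mean. -/
noncomputable def popMean {N : ℕ} (u : Fin N → ℝ) : ℝ := (∑ i, u i) / (N : ℝ)

/-- Finite-population variance σ_u² = (1/N) Σᵢ (uᵢ − ū)². -/
noncomputable def popVar {N : ℕ} (u : Fin N → ℝ) : ℝ :=
  (∑ i, (u i - popMean u) ^ 2) / (N : ℝ)

/-- Finite-population covariance σ_{u,v} = (1/N) Σᵢ (uᵢ − ū)(vᵢ − v̄). -/
noncomputable def popCov {N : ℕ} (u v : Fin N → ℝ) : ℝ :=
  (∑ i, (u i - popMean u) * (v i - popMean v)) / (N : ℝ)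

lemma card_filter_superset {α : Type*} [Fintype α] [DecidableEq α] (t : Finset α) (k : ℕ)
    (ht : t.card ≤ k) :
    ((powersetCard k (univ : Finset α)).filter (fun s => t ⊆ s)).card
      = Nat.choose (Fintype.card α - t.card) (k - t.card) := by
  have hcard : ((univ : Finset α) \ t).card = Fintype.card α - t.card := by
    rw [card_sdiff_of_subset (subset_univ t), card_univ]
  rw [← hcard, ← Finset.card_powersetCard (k - t.card) ((univ : Finset α) \ t)]
  apply Finset.card_bij' (fun s _ => s \ t) (fun r _ => r ∪ t)
  · intro s hs
    simp only [mem_filter, Finset.mem_powersetCard_univ] at hs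
    rw [Finset.mem_powersetCard]
    exact ⟨sdiff_subset_sdiff (subset_univ s) le_rfl, by rw [card_sdiff_of_subset hs.2, hs.1]⟩
  · intro r hr
    rw [Finset.mem_powersetCard] at hr
    have hdisj : Disjoint r t := disjoint_of_subset_left hr.1 sdiff_disjoint
    simp only [mem_filter, Finset.mem_powersetCard_univ]
    exact ⟨by rw [card_union_of_disjoint hdisj, hr.2]; omega, subset_union_right⟩
  · intro s hs
    simp only [mem_filter] at hs
    exact sdiff_union_of_subset hs.2
  · intro r hr
    rw [Finset.mem_powersetCard] at hr
    exact union_sdiff_cancel_right (disjoint_of_subset_left hr.1 sdiff_disjoint)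

lemma count_one {N : ℕ} (k : ℕ) (hk : 1 ≤ k) (i : Fin N) :
    ((powersetCard k (univ : Finset (Fin N))).filter (fun s => i ∈ s)).card
      = Nat.choose (N - 1) (k - 1) := by
  have := card_filter_superset ({i} : Finset (Fin N)) k (by simpa using hk)
  simp only [card_singleton, Fintype.card_fin, singleton_subset_iff] at this
  exact this

lemma count_two {N : ℕ} (k : ℕ) (hk : 2 ≤ k) {i j : Fin N} (hij : i ≠ j) :
    ((powersetCard k (univ : Finset (Fin N))).filter (fun s => i ∈ s ∧ j ∈ s)).card
      = Nat.choose (N - 2) (k - 2) := by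
  have := card_filter_superset ({i, j} : Finset (Fin N)) k
    (by rw [card_pair hij]; exact hk)
  rw [card_pair hij, Fintype.card_fin] at this
  rw [← this]
  congr 1
  apply filter_congr
  intro s _
  simp [insert_subset_iff]

lemma sum_indicator {N : ℕ} (s : Finset (Fin N)) (h : Fin N → ℝ) :
    ∑ i ∈ s, h i = ∑ i ∈ (univ : Finset (Fin N)), if i ∈ s then h i else 0 := by
  rw [Finset.sum_ite_mem, univ_inter]

lemma sum_sets {N k : ℕ} (g : Fin N → ℝ) :
    ∑ s ∈ powersetCard k (univ : Finset (Fin N)), ∑ i ∈ s, g i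
      = ∑ i, (((powersetCard k (univ : Finset (Fin N))).filter (fun s => i ∈ s)).card : ℝ) * g i := by
  calc ∑ s ∈ powersetCard k (univ : Finset (Fin N)), ∑ i ∈ s, g i
      = ∑ s ∈ powersetCard k (univ : Finset (Fin N)), ∑ i, if i ∈ s then g i else 0 := by
        exact Finset.sum_congr rfl fun s _ => sum_indicator s g
    _ = ∑ i, ∑ s ∈ powersetCard k (univ : Finset (Fin N)), if i ∈ s then g i else 0 :=
        Finset.sum_comm
    _ = ∑ i, (((powersetCard k (univ : Finset (Fin N))).filter (fun s => i ∈ s)).card : ℝ) * g i := by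
        refine Finset.sum_congr rfl fun i _ => ?_
        rw [← Finset.sum_filter, Finset.sum_const, nsmul_eq_mul]

lemma sum_sets_sq {N k : ℕ} (g : Fin N → ℝ) :
    ∑ s ∈ powersetCard k (univ : Finset (Fin N)), (∑ i ∈ s, g i) ^ 2
      = ∑ i, ∑ j, (((powersetCard k (univ : Finset (Fin N))).filter
          (fun s => i ∈ s ∧ j ∈ s)).card : ℝ) * (g i * g j) := by
  calc ∑ s ∈ powersetCard k (univ : Finset (Fin N)), (∑ i ∈ s, g i) ^ 2
      = ∑ s ∈ powersetCard k (univ : Finset (Fin N)), ∑ i, ∑ j,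
          if i ∈ s ∧ j ∈ s then g i * g j else 0 := by
        refine Finset.sum_congr rfl fun s _ => ?_
        rw [sq, Finset.sum_mul_sum]
        rw [sum_indicator s (fun i => ∑ j ∈ s, g i * g j)]
        refine Finset.sum_congr rfl fun i _ => ?_
        split_ifs with hi
        · rw [sum_indicator s (fun j => g i * g j)]
          refine Finset.sum_congr rfl fun j _ => ?_
          simp [hi]
        · symm
          apply Finset.sum_eq_zero
          intro j _
          simp [hi]
    _ = ∑ i, ∑ j, ∑ s ∈ powersetCard k (univ : Finset (Fin N)),
          if i ∈ s ∧ j ∈ s then g i * g j else 0 := by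
        rw [Finset.sum_comm]
        exact Finset.sum_congr rfl fun i _ => Finset.sum_comm
    _ = ∑ i, ∑ j, (((powersetCard k (univ : Finset (Fin N))).filter
          (fun s => i ∈ s ∧ j ∈ s)).card : ℝ) * (g i * g j) := by
        refine Finset.sum_congr rfl fun i _ => Finset.sum_congr rfl fun j _ => ?_
        rw [← Finset.sum_filter, Finset.sum_const, nsmul_eq_mul]



/-- **Variance of the difference of sample means across groups.**
Var(Ū₁ − V̄₀) = (1/(N−1)) [ n₀σ_u²/n₁ + n₁σ_v²/n₀ + 2σ_{u,v} ]
            = (1/(N−1)) [ (n₀²σ_u² + n₁²σ_v² + 2n₁n₀σ_{u,v}) / (n₁n₀) ]. -/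
theorem variance_difference_sample_means
    {N n₀ n₁ : ℕ} (h₁ : 0 < n₁) (h₀ : 0 < n₀) (hN : n₀ + n₁ = N)
    (u v : Fin N → ℝ) :
    vr N n₁ (fun s => groupMean u s - groupMean v sᶜ) =
      (1 / ((N : ℝ) - 1)) *
        ((n₀ : ℝ) * popVar u / (n₁ : ℝ) + (n₁ : ℝ) * popVar v / (n₀ : ℝ) +
          2 * popCov u v) ∧
    vr N n₁ (fun s => groupMean u s - groupMean v sᶜ) =
      (1 / ((N : ℝ) - 1)) *
        (((n₀ : ℝ) ^ 2 * popVar u + (n₁ : ℝ) ^ 2 * popVar v +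
            2 * (n₁ : ℝ) * (n₀ : ℝ) * popCov u v) / ((n₁ : ℝ) * (n₀ : ℝ))) := by
  have hn₁ : (0:ℝ) < n₁ := by exact_mod_cast h₁
  have hn₀ : (0:ℝ) < n₀ := by exact_mod_cast h₀
  have hN2 : 2 ≤ N := by omega
  have hNR : (0:ℝ) < N := by exact_mod_cast (show 0 < N by omega)
  have hN1R : (0:ℝ) < (N:ℝ) - 1 := by
    have : (2:ℝ) ≤ N := by exact_mod_cast hN2
    linarith
  set P := powersetCard n₁ (univ : Finset (Fin N)) with hP
  have hKval : (P.card : ℝ) = (Nat.choose N n₁ : ℝ) := by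
    rw [hP, Finset.card_powersetCard, card_univ, Fintype.card_fin]
  have hKpos : (0:ℝ) < (P.card : ℝ) := by
    rw [hKval]
    exact_mod_cast Nat.choose_pos (show n₁ ≤ N by omega)
  set K : ℝ := (P.card : ℝ)
  set m : ℝ := popMean (fun i : Fin N => u i / n₁ + v i / n₀) with hm
  set w : Fin N → ℝ := fun i => u i / n₁ + v i / n₀ - m with hw
  have hmval : m = popMean u / n₁ + popMean v / n₀ := by
    rw [hm]; unfold popMean
    rw [Finset.sum_add_distrib, ← Finset.sum_div, ← Finset.sum_div]
    ring
  have hsum0 : ∑ i, w i = 0 := by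
    simp only [hw, Finset.sum_sub_distrib, Finset.sum_const, card_univ, Fintype.card_fin,
      nsmul_eq_mul]
    rw [hm]; unfold popMean
    rw [Finset.sum_add_distrib, ← Finset.sum_div, ← Finset.sum_div]
    field_simp
    ring
  set c : ℝ := (n₁ : ℝ) * m - (∑ i, v i) / n₀ with hc
  have hf : ∀ s ∈ P, groupMean u s - groupMean v sᶜ = (∑ i ∈ s, w i) + c := by
    intro s hs
    rw [hP, Finset.mem_powersetCard_univ] at hs
    have hscn : sᶜ.card = n₀ := by
      rw [Finset.card_compl, Fintype.card_fin, hs]; omega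
    have hcompl : ∑ i ∈ sᶜ, v i = (∑ i, v i) - ∑ i ∈ s, v i := by
      have := Finset.sum_add_sum_compl s v
      linarith
    have e1 : ∑ i ∈ s, w i = (∑ i ∈ s, u i) / n₁ + (∑ i ∈ s, v i) / n₀ - n₁ * m := by
      simp only [hw]
      rw [Finset.sum_sub_distrib, Finset.sum_add_distrib, Finset.sum_const, hs,
        nsmul_eq_mul, ← Finset.sum_div, ← Finset.sum_div]
    unfold groupMean
    rw [hs, hscn, hcompl, e1, hc]
    ring
  have hsumW : ∑ s ∈ P, ∑ i ∈ s, w i = 0 := by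
    rw [hP, sum_sets w]
    rw [Finset.sum_congr rfl (fun i _ => by rw [count_one n₁ h₁ i]), ← Finset.mul_sum,
      hsum0, mul_zero]
  have hE : expct N n₁ (fun s => groupMean u s - groupMean v sᶜ) = c := by
    unfold expct
    rw [← hP, Finset.sum_congr rfl hf, Finset.sum_add_distrib, hsumW, Finset.sum_const,
      nsmul_eq_mul, zero_add]
    exact mul_div_cancel_left₀ c hKpos.ne'
  set k1 : ℝ := (Nat.choose (N - 1) (n₁ - 1) : ℝ) with hk1
  set c2 : ℝ := if n₁ = 1 then 0 else (Nat.choose (N - 2) (n₁ - 2) : ℝ) with hc2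
  set Q : ℝ := ∑ i, w i ^ 2 with hQ
  have hvr : vr N n₁ (fun s => groupMean u s - groupMean v sᶜ)
      = (∑ s ∈ P, (∑ i ∈ s, w i) ^ 2) / K := by
    unfold vr
    rw [hE]
    unfold expct
    rw [← hP]
    congr 1
    refine Finset.sum_congr rfl fun s hs => ?_
    simp only [hf s hs]
    ring
  have hcnt : ∀ i j : Fin N,
      (((P.filter (fun s => i ∈ s ∧ j ∈ s)).card : ℝ)) = if i = j then k1 else c2 := by
    intro i j
    by_cases hij : i = j
    · subst hij
      rw [if_pos rfl, hk1, hP]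
      rw [← count_one n₁ h₁ i]
      simp only [and_self]
    · rw [if_neg hij, hc2]
      by_cases h1 : n₁ = 1
      · rw [if_pos h1]
        norm_cast
        rw [Finset.card_eq_zero, Finset.filter_eq_empty_iff]
        intro s hs
        rw [hP, Finset.mem_powersetCard_univ, h1] at hs
        obtain ⟨a, rfl⟩ := Finset.card_eq_one.mp hs
        simp only [Finset.mem_singleton]
        rintro ⟨rfl, rfl⟩
        exact hij rfl
      · rw [if_neg h1, hP, count_two n₁ (by omega) hij]
  have hsq : ∑ s ∈ P, (∑ i ∈ s, w i) ^ 2 = (k1 - c2) * Q := by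
    rw [hP, sum_sets_sq w, ← hP]
    have step1 : ∀ i : Fin N, ∑ j, (((P.filter (fun s => i ∈ s ∧ j ∈ s)).card : ℝ))
        * (w i * w j) = (k1 - c2) * w i ^ 2 := by
      intro i
      rw [Finset.sum_congr rfl (fun j _ => by rw [hcnt i j])]
      have e : ∀ j : Fin N, (if i = j then k1 else c2) * (w i * w j)
          = c2 * w i * w j + (if i = j then (k1 - c2) * (w i * w j) else 0) := by
        intro j; split_ifs with h <;> ring
      rw [Finset.sum_congr rfl (fun j _ => e j), Finset.sum_add_distrib,
        ← Finset.mul_sum, hsum0, mul_zero, zero_add, Finset.sum_ite_eq]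
      simp only [Finset.mem_univ, if_true]
      ring
    rw [Finset.sum_congr rfl (fun i _ => step1 i), ← Finset.mul_sum, hQ]
  have hrel1 : (N : ℝ) * k1 = (n₁ : ℝ) * K := by
    have h := Nat.add_one_mul_choose_eq (N - 1) (n₁ - 1)
    rw [show N - 1 + 1 = N by omega,
      show n₁ - 1 + 1 = n₁ by omega] at h
    rw [hKval, hk1]
    exact_mod_cast h.trans (mul_comm _ _)
  have hrel2 : ((N : ℝ) - 1) * c2 = ((n₁ : ℝ) - 1) * k1 := by
    by_cases h1 : n₁ = 1
    · rw [hc2, if_pos h1, h1]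
      norm_num
    · have h := Nat.add_one_mul_choose_eq (N - 2) (n₁ - 2)
      rw [show N - 2 + 1 = N - 1 by omega,
        show n₁ - 2 + 1 = n₁ - 1 by omega] at h
      rw [hc2, if_neg h1, hk1]
      have hcast : ((N : ℝ) - 1) = ((N - 1 : ℕ) : ℝ) := by
        rw [Nat.cast_sub (by omega)]; norm_num
      have hcast2 : ((n₁ : ℝ) - 1) = ((n₁ - 1 : ℕ) : ℝ) := by
        rw [Nat.cast_sub (by omega)]; norm_num
      rw [hcast, hcast2]
      exact_mod_cast h.trans (mul_comm _ _)
  -- population variance decomposition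
  have hsum1 : ∑ i, (u i - popMean u) ^ 2 = (N : ℝ) * popVar u := by
    unfold popVar; field_simp
  have hsum2 : ∑ i, (v i - popMean v) ^ 2 = (N : ℝ) * popVar v := by
    unfold popVar; field_simp
  have hsum3 : ∑ i, (u i - popMean u) * (v i - popMean v) = (N : ℝ) * popCov u v := by
    unfold popCov; field_simp
  have hQval : Q = (N : ℝ) * popVar u * ((1:ℝ)/(n₁:ℝ)^2)
      + (N : ℝ) * popVar v * ((1:ℝ)/(n₀:ℝ)^2)
      + (N : ℝ) * popCov u v * ((2:ℝ)/((n₁:ℝ)*(n₀:ℝ))) := by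
    have e : ∀ i : Fin N, w i ^ 2
        = (u i - popMean u) ^ 2 * ((1:ℝ)/(n₁:ℝ)^2)
          + (v i - popMean v) ^ 2 * ((1:ℝ)/(n₀:ℝ)^2)
          + ((u i - popMean u) * (v i - popMean v)) * ((2:ℝ)/((n₁:ℝ)*(n₀:ℝ))) := by
      intro i
      simp only [hw]
      rw [hmval]
      ring
    rw [hQ, Finset.sum_congr rfl (fun i _ => e i), Finset.sum_add_distrib,
      Finset.sum_add_distrib, ← Finset.sum_mul, ← Finset.sum_mul, ← Finset.sum_mul,
      hsum1, hsum2, hsum3]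
  have hk1v : k1 = (n₁ : ℝ) * K / N := by
    rw [eq_div_iff hNR.ne']; linarith
  have hc2v : c2 = ((n₁ : ℝ) - 1) * k1 / ((N : ℝ) - 1) := by
    rw [eq_div_iff hN1R.ne']; linarith
  have hNcast : (N : ℝ) = (n₀ : ℝ) + (n₁ : ℝ) := by
    rw [← hN]; push_cast; ring
  have hmain : vr N n₁ (fun s => groupMean u s - groupMean v sᶜ)
      = (1 / ((N : ℝ) - 1)) * ((n₀ : ℝ) * popVar u / (n₁ : ℝ)
          + (n₁ : ℝ) * popVar v / (n₀ : ℝ) + 2 * popCov u v) := by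
    rw [hvr, hsq, hQval, hc2v, hk1v]
    rw [hNcast] at hN1R ⊢
    field_simp
    ring
  constructor
  · exact hmain
  · rw [hmain]
    field_simp
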